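/- Let D be a digraph obtained from a tournament by deleting the edges of two disjoint stars with centers x and y (with x→y), whose vertex sets cover all of V(D). If every missing edge has positive in-degree and positive out-degree in the dependency digraph (so that every leaf b of S_y satisfies b→x and every leaf a of S_x satisfies y→a), then D has at least two vertices with the second neighborhood property. -/

import Mathlib

variable {V : Type*}

/-- Out-neighborhood of `v`. -/
def Nplus (A : V → V → Prop) (v : V) : Set V := {u | A v u}

/-- In-neighborhood of `v`. -/
def Nminus (A : V → V → Prop) (v : V) : Set V := {u | A u v}

/-- Second out-neighborhood: vertices at directed distance exactly 2 from `v`. -/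
def Npp (A : V → V → Prop) (v : V) : Set V :=
  {u | u ≠ v ∧ ¬ A v u ∧ ∃ w, A v w ∧ A w u}

/-- The second neighborhood property. -/
def SNP (A : V → V → Prop) (v : V) : Prop := (Nplus A v).ncard ≤ (Npp A v).ncard

/-- A digraph (given by its arc relation) has no digons: no 2-cycles (this also rules out loops when stated for `u = v`). -/
def NoDigons (A : V → V → Prop) : Prop := ∀ u v, ¬ (A u v ∧ A v u)

/-- A tournament: an orientation of a complete graph. -/
def IsTournament (A : V → V → Prop) : Prop :=
  (∀ v, ¬ A v v) ∧ ∀ u v : V, u ≠ v → (A u v ↔ ¬ A v u)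

/-- `u v` is a missing edge: distinct and non-adjacent. -/
def MissingEdge (A : V → V → Prop) (u v : V) : Prop := u ≠ v ∧ ¬ A u v ∧ ¬ A v u

/-- `x₁y₁` loses to `x₂y₂` (with this labelling of endpoints). -/
def LosesAt (A : V → V → Prop) (x₁ y₁ x₂ y₂ : V) : Prop :=
  A x₁ x₂ ∧ ¬ A x₁ y₂ ∧ y₂ ∉ Npp A x₁ ∧ A y₁ y₂ ∧ ¬ A y₁ x₂ ∧ x₂ ∉ Npp A y₁

/-- The losing relation between (unordered) missing edges: the arcs of the dependency digraph. -/
def EdgeLoses (A : V → V → Prop) (e e' : Sym2 V) : Prop :=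
  ∃ x₁ y₁ x₂ y₂, e = s(x₁, y₁) ∧ e' = s(x₂, y₂) ∧
    MissingEdge A x₁ y₁ ∧ MissingEdge A x₂ y₂ ∧ LosesAt A x₁ y₁ x₂ y₂
namespace SNPAux

open Classical in
/-- Count elements of a list satisfying a (classical) predicate. -/
noncomputable def cnt {V : Type*} (p : V → Prop) : List V → ℕ
  | [] => 0
  | a :: l => (if p a then 1 else 0) + cnt p l

open Classical in
/-- Number of "forward arcs" from the head onwards. -/
noncomputable def wt {V : Type*} (T : V → V → Prop) : List V → ℕ
  | [] => 0
  | a :: l => cnt (fun b => T a b) l + wt T l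

open Classical in
/-- Cross count of arcs from `s` into `t`. -/
noncomputable def cross {V : Type*} (T : V → V → Prop) : List V → List V → ℕ
  | [], _ => 0
  | a :: s, t => cnt (fun b => T a b) t + cross T s t

variable {V : Type*}

lemma cnt_append (p : V → Prop) (l₁ l₂ : List V) :
    cnt p (l₁ ++ l₂) = cnt p l₁ + cnt p l₂ := by
  induction l₁ with
  | nil => simp [cnt]
  | cons a l ih => simp [cnt, ih]; omega

lemma cnt_mono {p q : V → Prop} {l : List V} (h : ∀ a ∈ l, p a → q a) :
    cnt p l ≤ cnt q l := by
  induction l with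
  | nil => simp [cnt]
  | cons a l ih =>
    have h1 := h a (by simp)
    have h2 : ∀ a ∈ l, p a → q a := fun a ha => h a (by simp [ha])
    have := ih h2
    simp only [cnt]
    by_cases hp : p a
    · simp [hp, h1 hp]; omega
    · simp [hp]; split <;> omega

lemma cnt_cons_pos {p : V → Prop} {a : V} (l : List V) (h : p a) :
    cnt p (a :: l) = cnt p l + 1 := by
  simp [cnt, h]; omega

lemma cnt_cons_neg {p : V → Prop} {a : V} (l : List V) (h : ¬ p a) :
    cnt p (a :: l) = cnt p l := by
  simp [cnt, h]

lemma cnt_perm (p : V → Prop) {l l' : List V} (h : l.Perm l') :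
    cnt p l = cnt p l' := by
  induction h with
  | nil => rfl
  | cons a _ ih => simp [cnt, ih]
  | swap a b l => simp [cnt]; omega
  | trans _ _ ih1 ih2 => omega

lemma wt_append (T : V → V → Prop) (s t : List V) :
    wt T (s ++ t) = wt T s + cross T s t + wt T t := by
  induction s with
  | nil => simp [wt, cross]
  | cons a s ih => simp [wt, cross, ih, cnt_append]; omega

lemma cross_cons_right (T : V → V → Prop) (s : List V) (x : V) (t : List V) :
    cross T s (x :: t) = cnt (fun a => T a x) s + cross T s t := by
  induction s with
  | nil => simp [cross, cnt]
  | cons a s ih => simp [cross, cnt, ih]; split <;> omega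

lemma cross_perm_right (T : V → V → Prop) (s : List V) {t t' : List V} (h : t.Perm t') :
    cross T s t = cross T s t' := by
  induction s with
  | nil => simp [cross]
  | cons a s ih => simp [cross, ih, cnt_perm _ h]

/-- Order is maximal (median) among its permutations. -/
def Maxl (T : V → V → Prop) (l : List V) : Prop := ∀ l', l'.Perm l → wt T l' ≤ wt T l

/-- Move-to-front inequality for median orders: any element of a (suffix of the)
order has at least as many in-neighbours as out-neighbours among the elements
between the cut and itself. -/
lemma fm {T : V → V → Prop} {l : List V} (hmax : Maxl T l)
    (l₁ m₁ : List V) (x : V) (m₂ : List V) (h : l = l₁ ++ (m₁ ++ x :: m₂)) :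
    cnt (fun a => T x a) m₁ ≤ cnt (fun a => T a x) m₁ := by
  have hp : (m₁ ++ x :: m₂).Perm (x :: (m₁ ++ m₂)) := List.perm_middle
  have hperm : (l₁ ++ (x :: (m₁ ++ m₂))).Perm l := by
    rw [h]; exact (hp.symm.append_left l₁)
  have hle := hmax _ hperm
  rw [h, wt_append, wt_append, cross_perm_right T l₁ hp] at hle
  have e1 : wt T (m₁ ++ x :: m₂)
      = wt T m₁ + (cnt (fun a => T a x) m₁ + cross T m₁ m₂)
        + (cnt (fun b => T x b) m₂ + wt T m₂) := by
    rw [wt_append, cross_cons_right]; simp [wt]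
  have e2 : wt T (x :: (m₁ ++ m₂))
      = cnt (fun b => T x b) m₁ + cnt (fun b => T x b) m₂
        + (wt T m₁ + cross T m₁ m₂ + wt T m₂) := by
    simp only [wt, cnt_append, wt_append]
  omega

lemma split_first (p : V → Prop) :
    ∀ l : List V, (∀ a ∈ l, ¬ p a) ∨
      ∃ q b s, l = q ++ b :: s ∧ p b ∧ ∀ a ∈ q, ¬ p a := by
  intro l
  induction l with
  | nil => left; simp
  | cons a l ih =>
    by_cases hpa : p a
    · right; exact ⟨[], a, l, by simp, hpa, by simp⟩
    · rcases ih with h | ⟨q, b, s, hqs, hb, hq⟩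
      · left; intro z hz; rcases List.mem_cons.mp hz with rfl | hz
        · exact hpa
        · exact h z hz
      · right
        refine ⟨a :: q, b, s, by simp [hqs], hb, ?_⟩
        intro z hz; rcases List.mem_cons.mp hz with rfl | hz
        · exact hpa
        · exact hq z hz

/-- Core of Fisher's theorem (Havet–Thomassé): for a median order with last
vertex `u`, the number of out-neighbours of `u` is at most the number of
vertices reachable in two steps (and dominating `u`). -/
lemma fisher_core {T : V → V → Prop} (hnd : ∀ u v, ¬ (T u v ∧ T v u)) :
    ∀ (n : ℕ) (l₀ : List V) (u : V), l₀.length ≤ n →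
    (l₀ ++ [u]).Nodup →
    (∀ a ∈ l₀ ++ [u], ∀ b ∈ l₀ ++ [u], a ≠ b → T a b ∨ T b a) →
    (∀ (l₁ m₁ : List V) (x : V) (m₂ : List V), l₀ ++ [u] = l₁ ++ (m₁ ++ x :: m₂) →
        cnt (fun a => T x a) m₁ ≤ cnt (fun a => T a x) m₁) →
    cnt (fun z => T u z) l₀ ≤ cnt (fun z => T z u ∧ ∃ w ∈ l₀, T u w ∧ T w z) l₀ := by
  intro n
  induction n with
  | zero =>
    intro l₀ u hlen _ _ _
    have : l₀ = [] := List.length_eq_zero_iff.mp (Nat.le_zero.mp hlen)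
    subst this; simp [cnt]
  | succ n ih =>
    intro l₀ u hlen hnodup hadj hfm
    set good : V → Prop := fun z => T z u ∧ ∃ w ∈ l₀, T u w ∧ T w z with hgood
    have hul : u ∉ l₀ := by
      have := List.nodup_append'.mp hnodup
      intro hu; exact this.2.2 hu (by simp)
    rcases split_first (fun z => T z u ∧ ¬ good z) l₀ with hnone | ⟨q, b, s, hql, hb, hq⟩
    · -- no bad vertex: move u to the front
      have h1 : cnt (fun z => T u z) l₀ ≤ cnt (fun z => T z u) l₀ :=
        hfm [] l₀ u [] (by simp)
      refine h1.trans (cnt_mono ?_)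
      intro a ha hTau
      by_contra hga
      exact hnone a ha ⟨hTau, hga⟩
    · -- q = prefix before the first bad vertex b
      have hbu : T b u := hb.1
      have hnotgoodb : ¬ good b := hb.2
      have hbl₀ : b ∈ l₀ := by rw [hql]; simp
      have hnodup₀ : l₀.Nodup := (List.nodup_append.mp hnodup).1
      have hbq : b ∉ q := by
        rw [hql] at hnodup₀
        have := List.nodup_append'.mp hnodup₀
        intro hbq; exact this.2.2 hbq (by simp)
      -- (a) suffix part via induction
      have hlens : s.length ≤ n := by
        have := hlen
        rw [hql] at this; simp [List.length_append] at this; omega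
      have hsub : (s ++ [u]).Sublist (l₀ ++ [u]) := by
        rw [hql]
        have h1 : (s ++ [u]).Sublist (b :: (s ++ [u])) := List.sublist_cons_self _ _
        have h2 : (b :: (s ++ [u])).Sublist (q ++ b :: (s ++ [u])) :=
          List.sublist_append_right _ _
        simpa using h1.trans h2
      have hih := ih s u hlens (hnodup.sublist hsub)
        (fun a ha b hbmem hab => hadj a (hsub.subset ha) b (hsub.subset hbmem) hab)
        (by
          intro l₁ m₁ x m₂ hdec
          refine hfm (q ++ b :: l₁) m₁ x m₂ ?_
          rw [hql]
          simp only [List.append_assoc, List.cons_append]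
          rw [← hdec])
      have hihs : cnt (fun z => T u z) s ≤ cnt good s := by
        refine hih.trans (cnt_mono ?_)
        rintro a ha ⟨h1, w, hw, h2, h3⟩
        exact ⟨h1, w, by rw [hql]; simp [hw], h2, h3⟩
      -- (b) prefix part via move-to-front of b
      have hfmb : cnt (fun a => T b a) q ≤ cnt (fun a => T a b) q :=
        hfm [] q b (s ++ [u]) (by rw [hql]; simp)
      have pw1 : ∀ a ∈ q, T u a → T b a := by
        intro a ha hTua
        have hal₀ : a ∈ l₀ := by rw [hql]; simp [ha]
        have hab : ¬ T a b := fun h => hnotgoodb ⟨hbu, a, hal₀, hTua, h⟩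
        have hne : a ≠ b := fun h => hbq (h ▸ ha)
        rcases hadj a (by simp [hal₀]) b (by simp [hbl₀]) hne with h | h
        · exact absurd h hab
        · exact h
      have pw2 : ∀ a ∈ q, T a b → good a := by
        intro a ha hTab
        have hal₀ : a ∈ l₀ := by rw [hql]; simp [ha]
        have hau : a ≠ u := fun h => hul (h ▸ hal₀)
        have hnTua : ¬ T u a := fun hTua => hnotgoodb ⟨hbu, a, hal₀, hTua, hTab⟩
        have hTau : T a u := by
          rcases hadj u (by simp) a (by simp [hal₀]) (Ne.symm hau) with h | h
          · exact absurd h hnTua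
          · exact h
        by_contra hga
        exact hq a ha ⟨hTau, hga⟩
      have hqpart : cnt (fun z => T u z) q ≤ cnt good q :=
        ((cnt_mono pw1).trans hfmb).trans (cnt_mono pw2)
      -- combine
      have hTub : ¬ T u b := fun h => hnd u b ⟨h, hbu⟩
      have e1 : cnt (fun z => T u z) l₀ = cnt (fun z => T u z) q + cnt (fun z => T u z) s := by
        rw [hql, cnt_append, cnt_cons_neg _ hTub]
      have e2 : cnt good l₀ = cnt good q + cnt good s := by
        rw [hql, cnt_append, cnt_cons_neg _ hnotgoodb]
      omega

lemma cnt_eq_card_filter [DecidableEq V] (p : V → Prop) [DecidablePred p]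
    {l : List V} (hn : l.Nodup) :
    cnt p l = (l.toFinset.filter p).card := by
  induction l with
  | nil => simp [cnt]
  | cons a l ih =>
    have hal : a ∉ l := (List.nodup_cons.mp hn).1
    have hnl : l.Nodup := (List.nodup_cons.mp hn).2
    rw [List.toFinset_cons, Finset.filter_insert]
    by_cases hp : p a
    · rw [if_pos hp, Finset.card_insert_of_notMem (by simp [hal])]
      simp [cnt, hp, ih hnl]; omega
    · rw [if_neg hp]
      simp [cnt, hp, ih hnl]

end SNPAux

/-- a digraph obtained from a tournament by deleting the edges of
two disjoint stars with centers `x → y` which together cover all vertices, in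
which every missing edge has positive in-degree and positive out-degree in the
dependency digraph, has at least two vertices with the SNP. -/
theorem tournament_minus_two_covering_stars_two_SNP [Fintype V]
    (A : V → V → Prop) (hA : NoDigons A)
    (x y : V) (hxy : x ≠ y) (hxyArc : A x y)
    -- the missing graph is the disjoint union of two stars with centers x and y:
    (hStar : ∀ u v, MissingEdge A u v → u = x ∨ v = x ∨ u = y ∨ v = y)
    (hDisj : ∀ v, ¬ (MissingEdge A v x ∧ MissingEdge A v y))
    (hxLeaf : ∃ a, MissingEdge A x a) (hyLeaf : ∃ b, MissingEdge A y b)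
    -- the two stars cover all of V(D):
    (hCover : ∀ v : V, v = x ∨ v = y ∨ MissingEdge A v x ∨ MissingEdge A v y)
    -- δ(Δ) > 0:
    (hIndeg : ∀ u v, MissingEdge A u v → ∃ e : Sym2 V, EdgeLoses A e s(u, v))
    (hOutdeg : ∀ u v, MissingEdge A u v → ∃ e : Sym2 V, EdgeLoses A s(u, v) e) :
    ∃ v w : V, v ≠ w ∧ SNP A v ∧ SNP A w := by
  classical
  have hirr : ∀ v, ¬ A v v := fun v h => hA v v ⟨h, h⟩
  have hMsymm : ∀ u v, MissingEdge A u v → MissingEdge A v u :=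
    fun u v ⟨h1, h2, h3⟩ => ⟨Ne.symm h1, h3, h2⟩
  -- every leaf of the x-star is dominated by y
  have F1 : ∀ a, MissingEdge A x a → A y a := by
    intro a ha
    obtain ⟨e, x₁, y₁, x₂, y₂, he, he', m₁, m₂, L1, L2, L3, L4, L5, L6⟩ := hIndeg x a ha
    rcases Sym2.eq_iff.mp he' with ⟨hx2, hy2⟩ | ⟨hx2, hy2⟩
    · rw [← hx2] at L1 L5; rw [← hy2] at L2 L4
      rcases hStar x₁ y₁ m₁ with h | h | h | h
      · rw [h] at L1; exact absurd L1 (hirr x)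
      · rw [h] at L4; exact absurd L4 ha.2.1
      · rw [h] at L1; exact absurd (hA x y ⟨hxyArc, L1⟩) (fun hh => hh)
      · rw [h] at L4; exact L4
    · rw [← hx2] at L2 L4; rw [← hy2] at L1 L5
      rcases hStar x₁ y₁ m₁ with h | h | h | h
      · rw [h] at L1; exact absurd L1 ha.2.1
      · rw [h] at L4; exact absurd L4 (hirr x)
      · rw [h] at L1; exact L1
      · rw [h] at L4; exact absurd (hA x y ⟨hxyArc, L4⟩) (fun hh => hh)
  -- every leaf of the y-star dominates x
  have F2 : ∀ b, MissingEdge A y b → A b x := by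
    intro b hb
    have hbx : b ≠ x := by rintro rfl; exact hb.2.2 hxyArc
    have hbadj : ¬ A x b → A b x := by
      intro h
      have hnm : ¬ MissingEdge A b x := fun hm => hDisj b ⟨hm, hMsymm _ _ hb⟩
      by_contra h2
      exact hnm ⟨hbx, h2, h⟩
    obtain ⟨e, x₁, y₁, x₂, y₂, he, he', m₁, m₂, L1, L2, L3, L4, L5, L6⟩ := hIndeg y b hb
    rcases Sym2.eq_iff.mp he' with ⟨hx2, hy2⟩ | ⟨hx2, hy2⟩
    · rw [← hx2] at L1 L5; rw [← hy2] at L2 L4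
      rcases hStar x₁ y₁ m₁ with h | h | h | h
      · rw [h] at L2; exact hbadj L2
      · rw [h] at L5; exact absurd hxyArc L5
      · rw [h] at L1; exact absurd L1 (hirr y)
      · rw [h] at L4; exact absurd L4 hb.2.1
    · rw [← hx2] at L2 L4; rw [← hy2] at L1 L5
      rcases hStar x₁ y₁ m₁ with h | h | h | h
      · rw [h] at L2; exact absurd hxyArc L2
      · rw [h] at L5; exact hbadj L5
      · rw [h] at L1; exact absurd L1 hb.2.1
      · rw [h] at L4; exact absurd L4 (hirr y)
  -- x has the SNP
  obtain ⟨a₀, ha₀⟩ := hxLeaf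
  have ha₀x : a₀ ≠ x := Ne.symm ha₀.1
  have ha₀y : a₀ ≠ y := by rintro rfl; exact ha₀.2.1 hxyArc
  have hSNPx : SNP A x := by
    have hNplusx : Nplus A x = {y} := by
      ext v
      simp only [Nplus, Set.mem_setOf_eq, Set.mem_singleton_iff]
      constructor
      · intro hxv
        rcases hCover v with h | h | hm | hm
        · rw [h] at hxv; exact absurd hxv (hirr x)
        · exact h
        · exact absurd hxv hm.2.2
        · exact absurd (hA x v ⟨hxv, F2 v (hMsymm _ _ hm)⟩) (fun h => h)
      · intro h; rw [h]; exact hxyArc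
    have ha₀Npp : a₀ ∈ Npp A x := ⟨ha₀x, ha₀.2.1, y, hxyArc, F1 a₀ ha₀⟩
    rw [SNP, hNplusx, Set.ncard_singleton]
    exact (Set.ncard_pos (Set.toFinite _)).mpr ⟨a₀, ha₀Npp⟩
  -- the tournament on W = V \ {x, y}
  set W : Finset V := Finset.univ.filter (fun v => v ≠ x ∧ v ≠ y) with hW
  have hpermsne : (W.toList.permutations).toFinset.Nonempty :=
    ⟨W.toList, by simp [List.mem_permutations]⟩
  obtain ⟨l, hlmem, hlmax'⟩ := Finset.exists_max_image _ (SNPAux.wt A) hpermsne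
  have hlperm : l.Perm W.toList := List.mem_permutations.mp (List.mem_toFinset.mp hlmem)
  have hmax : SNPAux.Maxl A l := fun l' hl' =>
    hlmax' l' (List.mem_toFinset.mpr (List.mem_permutations.mpr (hl'.trans hlperm)))
  have hlmemW : ∀ v, v ∈ l ↔ (v ≠ x ∧ v ≠ y) := by
    intro v; rw [hlperm.mem_iff, Finset.mem_toList]; simp [hW]
  have hlne : l ≠ [] := List.ne_nil_of_mem ((hlmemW a₀).mpr ⟨ha₀x, ha₀y⟩)
  have hnodup : l.Nodup := hlperm.nodup_iff.mpr W.nodup_toList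
  set u := l.getLast hlne with hu
  set l₀ := l.dropLast with hl₀def
  have hlsplit : l₀ ++ [u] = l := List.dropLast_append_getLast hlne
  have hnodup' : (l₀ ++ [u]).Nodup := by rw [hlsplit]; exact hnodup
  have hnodup₀ : l₀.Nodup := (List.nodup_append.mp hnodup').1
  have hul₀ : u ∉ l₀ := fun h => (List.nodup_append'.mp hnodup').2.2 h (by simp)
  have hmem₀ : ∀ v, v ∈ l₀ ↔ (v ∈ l ∧ v ≠ u) := by
    intro v
    constructor
    · intro hv
      exact ⟨by rw [← hlsplit]; exact List.mem_append_left _ hv,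
        fun h => hul₀ (h ▸ hv)⟩
    · rintro ⟨hv, hne⟩
      rw [← hlsplit] at hv
      rcases List.mem_append.mp hv with h | h
      · exact h
      · simp at h; exact absurd h hne
  have huW : u ∈ l := l.getLast_mem hlne
  have hux : u ≠ x := ((hlmemW u).mp huW).1
  have huy : u ≠ y := ((hlmemW u).mp huW).2
  have hadj : ∀ a ∈ l₀ ++ [u], ∀ b ∈ l₀ ++ [u], a ≠ b → A a b ∨ A b a := by
    rw [hlsplit]
    intro a ha b hb hab
    by_contra hcon
    push_neg at hcon
    have hm : MissingEdge A a b := ⟨hab, hcon.1, hcon.2⟩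
    rcases hStar a b hm with h | h | h | h
    · exact ((hlmemW a).mp ha).1 h
    · exact ((hlmemW b).mp hb).1 h
    · exact ((hlmemW a).mp ha).2 h
    · exact ((hlmemW b).mp hb).2 h
  have hkey := SNPAux.fisher_core hA l₀.length l₀ u le_rfl hnodup' hadj
    (fun l₁ m₁ z m₂ h => SNPAux.fm hmax l₁ m₁ z m₂ (by rw [← hlsplit, h]))
  -- convert the counts to set cardinalities
  set good : V → Prop := fun z => A z u ∧ ∃ w ∈ l₀, A u w ∧ A w z with hgood
  set Pfin : Finset V := l₀.toFinset.filter (fun z => A u z) with hPfin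
  set Gfin : Finset V := l₀.toFinset.filter good with hGfin
  have hcntP : SNPAux.cnt (fun z => A u z) l₀ = Pfin.card :=
    SNPAux.cnt_eq_card_filter _ hnodup₀
  have hcntG : SNPAux.cnt good l₀ = Gfin.card :=
    SNPAux.cnt_eq_card_filter _ hnodup₀
  have hPG : Pfin.card ≤ Gfin.card := by rw [← hcntP, ← hcntG]; exact hkey
  have hGfinNpp : ↑Gfin ⊆ Npp A u := by
    intro z hz
    simp only [hGfin, Finset.coe_filter, Set.mem_setOf_eq, List.mem_toFinset] at hz
    obtain ⟨hzl₀, h1, w, hw, h2, h3⟩ := hz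
    exact ⟨((hmem₀ z).mp hzl₀).2, fun h => hA u z ⟨h, h1⟩, w, h2, h3⟩
  have hxl₀ : x ∉ l₀ := fun h => ((hlmemW x).mp ((hmem₀ x).mp h).1).1 rfl
  have hyl₀ : y ∉ l₀ := fun h => ((hlmemW y).mp ((hmem₀ y).mp h).1).2 rfl
  refine ⟨x, u, Ne.symm hux, hSNPx, ?_⟩
  rcases hCover u with h | h | hm | hm
  · exact absurd h hux
  · exact absurd h huy
  · -- u is a leaf of the x-star
    have hyu : A y u := F1 u (hMsymm _ _ hm)
    have hNplus : Nplus A u = ↑Pfin := by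
      ext v
      simp only [Nplus, Set.mem_setOf_eq, hPfin, Finset.coe_filter, List.mem_toFinset]
      constructor
      · intro huv
        refine ⟨(hmem₀ v).mpr ⟨(hlmemW v).mpr ⟨?_, ?_⟩, fun h => hirr u (h ▸ huv)⟩, huv⟩
        · intro hvx; rw [hvx] at huv; exact hm.2.1 huv
        · intro hvy; rw [hvy] at huv; exact hA u y ⟨huv, hyu⟩
      · exact fun h => h.2
    rw [SNP, hNplus, Set.ncard_coe_finset]
    calc Pfin.card ≤ Gfin.card := hPG
      _ = (↑Gfin : Set V).ncard := (Set.ncard_coe_finset _).symm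
      _ ≤ (Npp A u).ncard := Set.ncard_le_ncard hGfinNpp (Set.toFinite _)
  · -- u is a leaf of the y-star
    have hAux : A u x := F2 u (hMsymm _ _ hm)
    have hNplus : Nplus A u = ↑(insert x Pfin) := by
      ext v
      simp only [Nplus, Set.mem_setOf_eq, Finset.coe_insert, Set.mem_insert_iff,
        hPfin, Finset.coe_filter, List.mem_toFinset]
      constructor
      · intro huv
        by_cases hvx : v = x
        · exact Or.inl hvx
        · refine Or.inr ⟨(hmem₀ v).mpr ⟨(hlmemW v).mpr ⟨hvx, ?_⟩,
            fun h => hirr u (h ▸ huv)⟩, huv⟩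
          intro hvy; rw [hvy] at huv; exact hm.2.1 huv
      · rintro (rfl | h)
        · exact hAux
        · exact h.2
    have hyNpp : y ∈ Npp A u := ⟨Ne.symm huy, hm.2.1, x, hAux, hxyArc⟩
    have hGins : ↑(insert y Gfin) ⊆ Npp A u := by
      intro z hz
      simp only [Finset.coe_insert, Set.mem_insert_iff] at hz
      rcases hz with rfl | hz
      · exact hyNpp
      · exact hGfinNpp hz
    have hxPfin : x ∉ Pfin := fun h => hxl₀ (List.mem_toFinset.mp (Finset.mem_filter.mp h).1)
    have hyGfin : y ∉ Gfin := fun h => hyl₀ (List.mem_toFinset.mp (Finset.mem_filter.mp h).1)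
    rw [SNP, hNplus, Set.ncard_coe_finset, Finset.card_insert_of_notMem hxPfin]
    calc Pfin.card + 1 ≤ Gfin.card + 1 := by omega
      _ = (insert y Gfin).card := (Finset.card_insert_of_notMem hyGfin).symm
      _ = (↑(insert y Gfin) : Set V).ncard := (Set.ncard_coe_finset _).symm
      _ ≤ (Npp A u).ncard := Set.ncard_le_ncard hGins (Set.toFinite _)
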